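/- If n = 2s+1 is odd, then T_{s+1}(x) - T_s(x) = ∏_{d|n} Ψ̃_d(x), and if n = 2s is even, then T_{s+1}(x) - T_{s-1}(x) = ∏_{d|n} Ψ̃_d(x), where Ψ̃_d ∈ ℤ[x] is the integer-rescaled minimal polynomial of cos(2π/d) (with Ψ̃₁(x) = x - 1, Ψ̃_d(x) = 2^{deg Ψ_d}·Ψ_d(x) for d ≥ 2). -/

import Mathlib

open Real Polynomial Polynomial.Chebyshev

/-- `Ψ̃_d`: the integer-rescaled minimal polynomial of `cos (2π/d)`, with
`Ψ̃₁ = X - 1` and `Ψ̃_d = 2^(deg Ψ_d) • Ψ_d` for `d ≥ 2`. -/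
noncomputable def psiTilde (d : ℕ) : Polynomial ℚ :=
  if d = 1 then Polynomial.X - 1
  else (2 ^ (minpoly ℚ (Real.cos (2 * π / d))).natDegree : ℚ) •
    minpoly ℚ (Real.cos (2 * π / d))

open IntermediateField

lemma T_deg_aux (n : ℕ) :
    ((T ℚ n).natDegree = n ∧ (T ℚ n).leadingCoeff = 2 ^ (n - 1)) ∧
    ((T ℚ (n + 1 : ℕ)).natDegree = n + 1 ∧ (T ℚ (n + 1 : ℕ)).leadingCoeff = 2 ^ n) := by
  induction n with
  | zero => simp [T_zero, T_one]
  | succ n ih =>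
    obtain ⟨⟨hd0, hl0⟩, hd, hl⟩ := ih
    refine ⟨⟨hd, by simpa using hl⟩, ?_⟩
    have hT2 : (T ℚ (n + 2 : ℕ)) = 2 * X * T ℚ (n + 1 : ℕ) - T ℚ (n : ℕ) := by
      push_cast; exact T_add_two ℚ n
    have hne : T ℚ (n + 1 : ℕ) ≠ 0 := by
      intro h; rw [h] at hl; simp only [leadingCoeff_zero] at hl
      exact pow_ne_zero n two_ne_zero hl.symm
    have h2X : (2 * X * T ℚ (n + 1 : ℕ)).natDegree = n + 2 := by
      rw [natDegree_mul (by norm_num : (2 * X : ℚ[X]) ≠ 0) hne, hd]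
      simp [natDegree_X]; ring
    have h2Xl : (2 * X * T ℚ (n + 1 : ℕ)).leadingCoeff = 2 ^ (n + 1) := by
      rw [leadingCoeff_mul, hl, leadingCoeff_mul, leadingCoeff_X]
      norm_num [Polynomial.leadingCoeff]; ring
    have hlt : (T ℚ (n : ℕ)).natDegree < (2 * X * T ℚ (n + 1 : ℕ)).natDegree := by
      rw [h2X, hd0]; omega
    constructor
    · rw [hT2, natDegree_sub_eq_left_of_natDegree_lt hlt, h2X]
    · rw [hT2, leadingCoeff_sub_of_degree_lt (degree_lt_degree hlt), h2Xl]

lemma aevalT (x : ℝ) (k : ℤ) : aeval x (T ℚ k) = (T ℝ k).eval x := by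
  rw [aeval_def, ← eval_map, map_T]

lemma aeval_root (d n : ℕ) (hd : d ≠ 0) (hdvd : d ∣ n) (a b : ℤ) (hab : a + b = n) :
    aeval (Real.cos (2 * π / d)) (T ℚ a - T ℚ b) = 0 := by
  obtain ⟨m, rfl⟩ := hdvd
  have hdR : (d : ℝ) ≠ 0 := Nat.cast_ne_zero.mpr hd
  rw [map_sub, aevalT, aevalT, T_real_cos, T_real_cos, sub_eq_zero]
  have habR : (a : ℝ) = (d : ℝ) * m - b := by
    have : (a : ℤ) = (d : ℤ) * m - b := by push_cast at hab; omega
    exact_mod_cast this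
  have : (a : ℝ) * (2 * π / d) = (m : ℤ) * (2 * π) - (b : ℝ) * (2 * π / d) := by
    rw [habR]
    push_cast
    field_simp
  rw [this, Real.cos_int_mul_two_pi_sub]

lemma cos_integral (d : ℕ) (hd : d ≠ 0) : IsIntegral ℚ (Real.cos (2 * π / d)) := by
  have h0 : aeval (Real.cos (2 * π / d)) (T ℚ d - T ℚ 0) = 0 :=
    aeval_root d d hd dvd_rfl d 0 (by omega)
  have hne : (T ℚ d - T ℚ 0 : ℚ[X]) ≠ 0 := by
    intro h
    have h1 : (T ℚ d - T ℚ 0).natDegree = d := by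
      rcases Nat.exists_eq_add_of_le (Nat.one_le_iff_ne_zero.mpr hd) with ⟨k, rfl⟩
      have hk := (T_deg_aux k).2.1
      have h0' := (T_deg_aux 0).1.1
      rw [T_zero] at *
      rw [natDegree_sub_eq_left_of_natDegree_lt]
      · simpa [add_comm] using hk
      · simp only [natDegree_one]
        rw [show ((1 + k : ℕ) : ℤ) = ((k + 1 : ℕ) : ℤ) by push_cast; ring, hk]
        omega
    rw [h] at h1
    simp at h1
    omega
  exact (isAlgebraic_iff_isIntegral).mp ⟨T ℚ d - T ℚ 0, hne, h0⟩

lemma minpoly_one' : minpoly ℚ (Real.cos (2 * π / (1 : ℕ))) = X - 1 := by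
  have : Real.cos (2 * π / (1 : ℕ)) = algebraMap ℚ ℝ 1 := by
    norm_num [Real.cos_two_pi]
  rw [this, minpoly.eq_X_sub_C]
  simp

lemma minpoly_two' : minpoly ℚ (Real.cos (2 * π / (2 : ℕ))) = X + 1 := by
  have : Real.cos (2 * π / (2 : ℕ)) = algebraMap ℚ ℝ (-1) := by
    norm_num [Real.cos_pi]
  rw [this, minpoly.eq_X_sub_C]
  simp

lemma minpoly_ne_aux (d1 d2 : ℕ) (h1 : d1 ≠ 0) (h2 : d2 ≠ 0) (hnd : ¬ d2 ∣ d1) :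
    minpoly ℚ (Real.cos (2 * π / d1)) ≠ minpoly ℚ (Real.cos (2 * π / d2)) := by
  intro heq
  set q : ℚ[X] := T ℚ d1 - T ℚ 0 with hq
  have hdvd1 : minpoly ℚ (Real.cos (2 * π / d1)) ∣ q :=
    minpoly.dvd ℚ _ (aeval_root d1 d1 h1 dvd_rfl d1 0 (by omega))
  rw [heq] at hdvd1
  obtain ⟨r, hr⟩ := hdvd1
  have hz : aeval (Real.cos (2 * π / d2)) q = 0 := by
    rw [hr, map_mul, minpoly.aeval, zero_mul]
  rw [hq, map_sub, aevalT, aevalT, T_real_cos, T_real_cos, sub_eq_zero] at hz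
  norm_num [Real.cos_zero] at hz
  obtain ⟨k, hk⟩ := (Real.cos_eq_one_iff _).mp hz
  have hd2R : (d2 : ℝ) ≠ 0 := Nat.cast_ne_zero.mpr h2
  have : (k : ℝ) * d2 = d1 := by
    field_simp at hk
    have hpi : (2 : ℝ) * π ≠ 0 := by positivity
    -- hk : k * (2 * π) * d2 = d1 * (2 * π)  (approximately)
    nlinarith [Real.pi_pos, hk]
  have hZ : (k : ℤ) * d2 = d1 := by exact_mod_cast this
  exact hnd (Int.natCast_dvd_natCast.mp (Dvd.intro_left _ hZ))

lemma minpoly_ne (d1 d2 : ℕ) (h1 : d1 ≠ 0) (h2 : d2 ≠ 0) (hne : d1 ≠ d2) :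
    minpoly ℚ (Real.cos (2 * π / d1)) ≠ minpoly ℚ (Real.cos (2 * π / d2)) := by
  by_cases h : d2 ∣ d1
  · have : ¬ d1 ∣ d2 := fun h' => hne (Nat.dvd_antisymm h' h)
    exact (minpoly_ne_aux d2 d1 h2 h1 this).symm
  · exact minpoly_ne_aux d1 d2 h1 h2 h

set_option maxHeartbeats 1000000 in
set_option synthInstance.maxHeartbeats 400000 in
lemma two_mul_natDegree_minpoly_cos (d : ℕ) (hd : 3 ≤ d) :
    2 * (minpoly ℚ (Real.cos (2 * π / d))).natDegree = Nat.totient d := by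
  have hd0 : d ≠ 0 := by omega
  have hdR : (d : ℝ) ≠ 0 := Nat.cast_ne_zero.mpr hd0
  set θ : ℝ := 2 * π / d with hθ
  have hθpos : 0 < θ := by rw [hθ]; positivity
  have hθlt : θ < π := by
    rw [hθ, div_lt_iff₀ (by positivity)]
    have h3 : (3 : ℝ) ≤ d := by exact_mod_cast hd
    nlinarith [Real.pi_pos]
  set ζ : ℂ := Complex.exp (2 * ↑π * Complex.I / d) with hζdef
  have hζ : IsPrimitiveRoot ζ d := Complex.isPrimitiveRoot_exp d hd0
  have hζexp : ζ = Complex.exp (↑θ * Complex.I) := by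
    rw [hζdef, hθ]
    push_cast
    ring_nf
  have hζcos : ζ = Complex.cos θ + Complex.sin θ * Complex.I := by
    rw [hζexp, Complex.exp_mul_I]
  set c' : ℂ := ((Real.cos θ : ℝ) : ℂ) with hc'
  have hζne : ζ ≠ 0 := by rw [hζdef]; exact Complex.exp_ne_zero _
  have hsum : ζ + ζ⁻¹ = 2 * c' := by
    have e1 : Complex.exp (↑θ * Complex.I) + Complex.exp (-(↑θ * Complex.I)) = 2 * c' := by
      rw [Complex.exp_mul_I, ← neg_mul, Complex.exp_mul_I, Complex.cos_neg, Complex.sin_neg,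
        hc', Complex.ofReal_cos]
      ring
    rw [Complex.exp_neg] at e1
    rw [hζexp]
    exact e1
  have hkey : ζ^2 - 2*c'*ζ + 1 = 0 := by
    have h1 : (ζ + ζ⁻¹) * ζ = (2*c') * ζ := by rw [hsum]
    rw [add_mul, inv_mul_cancel₀ hζne] at h1
    linear_combination h1
  have hcos_int : IsIntegral ℚ (Real.cos θ) := cos_integral d hd0
  have hc'min : minpoly ℚ c' = minpoly ℚ (Real.cos θ) :=
    minpoly.algebraMap_eq Complex.ofReal_injective _
  have hc'int : IsIntegral ℚ c' := hcos_int.map (IsScalarTower.toAlgHom ℚ ℝ ℂ)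
  have hζint : IsIntegral ℚ ζ := (hζ.isIntegral (by omega)).tower_top
  set F : IntermediateField ℚ ℂ := ℚ⟮c'⟯ with hF
  have hcF : c' ∈ F := IntermediateField.mem_adjoin_simple_self ℚ c'
  have hζF : IsIntegral F ζ := hζint.tower_top
  have hreal : ∀ x : ℂ, x ∈ F → x.im = 0 := by
    intro x hx
    have hle : F ≤ Subfield.toIntermediateField (K := ℚ) (RingHom.fieldRange Complex.ofRealHom)
        (fun q => ⟨(q : ℝ), by simp⟩) := by
      apply IntermediateField.adjoin_le_iff.mpr
      rintro y hy
      rw [Set.mem_singleton_iff] at hy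
      subst hy
      exact ⟨Real.cos θ, rfl⟩
    have hx2 : x ∈ RingHom.fieldRange Complex.ofRealHom := hle hx
    obtain ⟨r, hr⟩ := RingHom.mem_fieldRange.mp hx2
    rw [← hr]
    simp
  have hζnotF : ζ ∉ F := by
    intro h
    have him : ζ.im = 0 := hreal ζ h
    rw [hζcos] at him
    simp at him
    exact (Real.sin_pos_of_pos_of_lt_pi hθpos hθlt).ne' him
  have hdeg2 : (minpoly F ζ).natDegree = 2 := by
    set a : F := 2 * ⟨c', hcF⟩ with ha
    set g : F[X] := X^2 + (C (-a) * X + 1) with hg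
    have hgdeg : g.natDegree = 2 := by
      rw [hg]
      compute_degree!
    have hgmonic : g.Monic := by
      apply monic_X_pow_add
      apply lt_of_le_of_lt (degree_add_le _ _)
      apply max_lt
      · exact lt_of_le_of_lt (degree_C_mul_X_le _) (by decide)
      · exact lt_of_le_of_lt degree_one_le (by decide)
    have hgz : aeval ζ g = 0 := by
      have haC : (algebraMap F ℂ) a = 2 * c' := rfl
      rw [hg]
      simp only [map_add, map_mul, map_pow, aeval_X, Polynomial.aeval_C, map_one, map_neg, haC]
      linear_combination hkey
    have hle2 : (minpoly F ζ).natDegree ≤ 2 := by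
      have := Polynomial.natDegree_le_of_dvd (minpoly.dvd F ζ hgz) hgmonic.ne_zero
      omega
    have hge2 : 2 ≤ (minpoly F ζ).natDegree := by
      rw [minpoly.two_le_natDegree_iff hζF]
      rintro ⟨y, hy⟩
      exact hζnotF (hy ▸ y.2)
    omega
  have hr2 : Module.finrank F (IntermediateField.adjoin F {ζ}) = 2 := by
    rw [IntermediateField.adjoin.finrank hζF, hdeg2]
  have hrF : Module.finrank ℚ F = (minpoly ℚ (Real.cos θ)).natDegree := by
    rw [hF, IntermediateField.adjoin.finrank hc'int, hc'min]
  have hEeq : (IntermediateField.adjoin F {ζ}).restrictScalars ℚ = ℚ⟮ζ⟯ := by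
    rw [hF]
    refine (IntermediateField.adjoin_adjoin_left ℚ {c'} {ζ}).trans ?_
    apply le_antisymm
    · apply IntermediateField.adjoin_le_iff.mpr
      rintro y (rfl | rfl)
      · have hcval : c' = (ζ + ζ⁻¹) / 2 := by
          rw [hsum]; ring
        rw [hcval]
        have hζmem : ζ ∈ ℚ⟮ζ⟯ := IntermediateField.mem_adjoin_simple_self ℚ ζ
        have h2m : (2 : ℂ) ∈ ℚ⟮ζ⟯ := by
          have := IntermediateField.intCast_mem ℚ⟮ζ⟯ 2
          exact_mod_cast this
        exact div_mem (add_mem hζmem (inv_mem hζmem)) h2m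
      · exact IntermediateField.mem_adjoin_simple_self ℚ ζ
    · exact IntermediateField.adjoin.mono _ _ _ Set.subset_union_right
  have hrfull : Module.finrank ℚ ℚ⟮ζ⟯ = Nat.totient d := by
    rw [IntermediateField.adjoin.finrank hζint, ← cyclotomic_eq_minpoly_rat hζ (by omega),
      natDegree_cyclotomic]
  have htower := Module.finrank_mul_finrank ℚ F (IntermediateField.adjoin F {ζ})
  rw [hr2, hrF] at htower
  have hrestrict : Module.finrank ℚ ((IntermediateField.adjoin F {ζ}).restrictScalars ℚ) =
      Module.finrank ℚ (IntermediateField.adjoin F {ζ}) := rfl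
  rw [hEeq, hrfull] at hrestrict
  omega

lemma deg_psum (n : ℕ) (hn : n ≠ 0) :
    2 * (∑ d ∈ n.divisors, (minpoly ℚ (Real.cos (2 * π / d))).natDegree)
      = n + 1 + (if 2 ∈ n.divisors then 1 else 0) := by
  rw [Finset.mul_sum]
  have hcongr : ∀ d ∈ n.divisors, 2 * (minpoly ℚ (Real.cos (2 * π / d))).natDegree
      = Nat.totient d + ((if d = 1 then 1 else 0) + (if d = 2 then 1 else 0)) := by
    intro d hd
    have hd0 : d ≠ 0 := (Nat.pos_of_mem_divisors hd).ne'
    have hx1 : ((X : ℚ[X]) - 1).natDegree = 1 := by simpa using natDegree_X_sub_C (1:ℚ)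
    have hx2 : ((X : ℚ[X]) + 1).natDegree = 1 := by simpa using natDegree_X_add_C (1:ℚ)
    rcases Nat.lt_or_ge d 3 with h3 | h3
    · interval_cases d
      · exact absurd rfl hd0
      · rw [minpoly_one', hx1]; simp
      · rw [minpoly_two', hx2]; simp [Nat.totient_two]
    · have h5 := two_mul_natDegree_minpoly_cos d h3
      rw [if_neg (by omega), if_neg (by omega)]
      omega
  rw [Finset.sum_congr rfl hcongr, Finset.sum_add_distrib, Finset.sum_add_distrib,
    Nat.sum_totient, Finset.sum_ite_eq' n.divisors 1 (fun _ => 1),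
    Finset.sum_ite_eq' n.divisors 2 (fun _ => 1),
    if_pos (Nat.one_mem_divisors.mpr hn)]
  omega

lemma key_core (n s a b : ℕ) (hn : 1 ≤ n) (hab : a + b = n) (hba : b < a) (has : a = s + 1)
    (hD : ∑ d ∈ n.divisors, (minpoly ℚ (Real.cos (2 * π / d))).natDegree = s + 1) :
    T ℚ (a : ℕ) - T ℚ (b : ℕ) = ∏ d ∈ n.divisors, psiTilde d := by
  classical
  set P : ℚ[X] := ∏ d ∈ n.divisors, minpoly ℚ (Real.cos (2 * π / d)) with hP
  have hint : ∀ d ∈ n.divisors, IsIntegral ℚ (Real.cos (2 * π / d)) :=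
    fun d hd => cos_integral d (Nat.pos_of_mem_divisors hd).ne'
  have hPmonic : P.Monic := monic_prod_of_monic _ _ (fun d hd => minpoly.monic (hint d hd))
  set L : ℚ[X] := T ℚ (a : ℕ) - T ℚ (b : ℕ) with hL
  have hTa := (T_deg_aux a).1
  have hTb := (T_deg_aux b).1
  have hlt : (T ℚ (b : ℕ)).natDegree < (T ℚ (a : ℕ)).natDegree := by
    rw [hTa.1, hTb.1]; exact hba
  have hLdeg : L.natDegree = a := by
    rw [hL, natDegree_sub_eq_left_of_natDegree_lt hlt, hTa.1]
  have hLlc : L.leadingCoeff = 2 ^ s := by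
    rw [hL, leadingCoeff_sub_of_degree_lt (degree_lt_degree hlt), hTa.2, has]
    simp
  have hLne : L ≠ 0 := by
    intro h
    rw [h, leadingCoeff_zero] at hLlc
    exact pow_ne_zero s two_ne_zero hLlc.symm
  -- P divides L
  have hdvd : P ∣ L := by
    apply Finset.prod_dvd_of_coprime
    · intro d1 h1 d2 h2 hne
      simp only [Function.onFun]
      have hirr1 := minpoly.irreducible (hint d1 h1)
      have hirr2 := minpoly.irreducible (hint d2 h2)
      rw [Irreducible.coprime_iff_not_dvd hirr1]
      intro hdd
      have hassoc := hirr1.associated_of_dvd hirr2 hdd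
      have heq := Polynomial.eq_of_monic_of_associated
        (minpoly.monic (hint d1 h1)) (minpoly.monic (hint d2 h2)) hassoc
      exact minpoly_ne d1 d2 (Nat.pos_of_mem_divisors h1).ne'
        (Nat.pos_of_mem_divisors h2).ne' hne heq
    · intro d hd
      apply minpoly.dvd
      exact aeval_root d n (Nat.pos_of_mem_divisors hd).ne' (Nat.mem_divisors.mp hd).1
        a b (by exact_mod_cast hab)
  obtain ⟨r, hr⟩ := hdvd
  have hPne : P ≠ 0 := hPmonic.ne_zero
  have hPdeg : P.natDegree = s + 1 := by
    rw [hP, natDegree_prod _ _ (fun d hd => (minpoly.monic (hint d hd)).ne_zero), hD]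
  have hrne : r ≠ 0 := by rintro rfl; rw [mul_zero] at hr; exact hLne hr
  have hrdeg : r.natDegree = 0 := by
    have := natDegree_mul hPne hrne
    rw [← hr, hLdeg, hPdeg, has] at this
    omega
  obtain ⟨u, hu⟩ := Polynomial.natDegree_eq_zero.mp hrdeg
  have hulc : u = 2 ^ s := by
    have : L.leadingCoeff = P.leadingCoeff * r.leadingCoeff := by rw [hr, leadingCoeff_mul]
    rw [hLlc, hPmonic.leadingCoeff, one_mul, ← hu, leadingCoeff_C] at this
    exact this.symm
  have hLP : L = C (2 ^ s : ℚ) * P := by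
    rw [hr, ← hu, hulc, mul_comm]
  -- RHS
  have h1mem : 1 ∈ n.divisors := Nat.one_mem_divisors.mpr (by omega)
  have hpsi : ∀ d ∈ n.divisors, psiTilde d =
      C ((2:ℚ) ^ (if d = 1 then 0 else (minpoly ℚ (Real.cos (2 * π / d))).natDegree)) *
        minpoly ℚ (Real.cos (2 * π / d)) := by
    intro d hd
    unfold psiTilde
    by_cases h : d = 1
    · subst h
      rw [if_pos rfl, if_pos rfl, minpoly_one']
      simp
    · rw [if_neg h, if_neg h, Polynomial.smul_eq_C_mul]
  have hsum0 : (∑ d ∈ n.divisors,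
      (if d = 1 then 0 else (minpoly ℚ (Real.cos (2 * π / d))).natDegree)) = s := by
    have hsplit := Finset.sum_eq_sum_sdiff_singleton_add h1mem
      (fun d => (minpoly ℚ (Real.cos (2 * π / d))).natDegree)
    have hifeq : (∑ d ∈ n.divisors,
        (if d = 1 then 0 else (minpoly ℚ (Real.cos (2 * π / d))).natDegree)) =
        ∑ d ∈ n.divisors \ {1}, (minpoly ℚ (Real.cos (2 * π / d))).natDegree := by
      rw [← Finset.sum_subset (Finset.sdiff_subset)]
      · apply Finset.sum_congr rfl
        intro d hd
        have : d ≠ 1 := by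
          intro h; subst h
          exact (Finset.mem_sdiff.mp hd).2 (Finset.mem_singleton_self 1)
        rw [if_neg this]
      · intro x hx hnx
        have : x = 1 := by
          by_contra h
          exact hnx (Finset.mem_sdiff.mpr ⟨hx, fun hm => h (Finset.mem_singleton.mp hm)⟩)
        rw [if_pos this]
    have hdeg1 : (minpoly ℚ (Real.cos (2 * π / (1:ℕ)))).natDegree = 1 := by
      rw [minpoly_one']
      simpa using natDegree_X_sub_C (1 : ℚ)
    rw [hifeq]
    rw [hD, hdeg1] at hsplit
    omega
  rw [Finset.prod_congr rfl hpsi, Finset.prod_mul_distrib, ← map_prod,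
    Finset.prod_pow_eq_pow_sum, hsum0, ← hP, ← hLP]

/-- Integer-coefficient Watkins–Zeitlin relations: for odd `n = 2s + 1`,
`T_{s+1} - T_s = ∏_{d ∣ n} Ψ̃_d`, and for even `n = 2s`,
`T_{s+1} - T_{s-1} = ∏_{d ∣ n} Ψ̃_d`. -/
theorem watkins_zeitlin (n s : ℕ) (hn : 1 ≤ n) :
    (n = 2 * s + 1 →
      Polynomial.Chebyshev.T ℚ (s + 1) - Polynomial.Chebyshev.T ℚ s =
        ∏ d ∈ n.divisors, psiTilde d) ∧
    (n = 2 * s → 1 ≤ s →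
      Polynomial.Chebyshev.T ℚ (s + 1) - Polynomial.Chebyshev.T ℚ (s - 1 : ℕ) =
        ∏ d ∈ n.divisors, psiTilde d) := by

  constructor
  · intro h
    have h2not : 2 ∉ n.divisors := by
      intro hm
      obtain ⟨k, hk⟩ := (Nat.mem_divisors.mp hm).1
      omega
    have hsum := deg_psum n (by omega)
    rw [if_neg h2not] at hsum
    have hD : ∑ d ∈ n.divisors, (minpoly ℚ (Real.cos (2 * π / d))).natDegree = s + 1 := by
      omega
    have hc := key_core n s (s+1) s hn (by omega) (by omega) rfl hD
    rw [show (((s+1 : ℕ)) : ℤ) = (s : ℤ) + 1 by push_cast; ring] at hc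
    exact hc
  · intro h hs
    have h2mem : 2 ∈ n.divisors := Nat.mem_divisors.mpr ⟨⟨s, h⟩, by omega⟩
    have hsum := deg_psum n (by omega)
    rw [if_pos h2mem] at hsum
    have hD : ∑ d ∈ n.divisors, (minpoly ℚ (Real.cos (2 * π / d))).natDegree = s + 1 := by
      omega
    have hc := key_core n s (s+1) (s-1) hn (by omega) (by omega) rfl hD
    rw [show (((s+1 : ℕ)) : ℤ) = (s : ℤ) + 1 by push_cast; ring] at hc
    exact hc
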